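/- If P ⊆ R^n is a polytope with non-empty interior satisfying λ(P) = 1/(n+1), where λ(P) = sup{λ : P = (1-λ)P + λV(P)}, then P is an n-dimensional simplex. -/

import Mathlib

open Set Pointwise Metric

/-- A polytope is the convex hull of finitely many points. -/
def IsPolytope {n : ℕ} (P : Set (EuclideanSpace ℝ (Fin n))) : Prop :=
  ∃ S : Finset (EuclideanSpace ℝ (Fin n)), P = convexHull ℝ (S : Set (EuclideanSpace ℝ (Fin n)))

/-- The vertex-generation parameter of a polytope. -/
noncomputable def lambdaParam {n : ℕ} (P : Set (EuclideanSpace ℝ (Fin n))) : ℝ :=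
  sSup {l : ℝ | l ∈ Set.Icc (0:ℝ) 1 ∧ P = (1 - l) • P + l • (P.extremePoints ℝ)}

lemma rep_mem {n : ℕ} {P V : Set (EuclideanSpace ℝ (Fin n))} (hPV : P = convexHull ℝ V)
    {t : Finset (EuclideanSpace ℝ (Fin n))} (hts : ↑t ⊆ V)
    {c : EuclideanSpace ℝ (Fin n) → ℝ}
    (hc0 : ∀ i ∈ t, 0 ≤ c i) (hc1 : ∑ i ∈ t, c i = 1) {x j : EuclideanSpace ℝ (Fin n)}
    (hx : ∑ i ∈ t, c i • i = x) (hj : j ∈ t) {l : ℝ} (hl0 : 0 ≤ l) (hl1 : l < 1)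
    (hcj : l ≤ c j) : x ∈ (1 - l) • P + l • V := by
  classical
  have h1l : (0:ℝ) < 1 - l := by linarith
  set c' : EuclideanSpace ℝ (Fin n) → ℝ := fun i => (c i - if i = j then l else 0) / (1 - l)
    with hc'
  have hsumite : ∑ i ∈ t, (if i = j then l else 0) = l := by
    rw [Finset.sum_ite_eq' t j (fun _ => l), if_pos hj]
  have hsum' : ∑ i ∈ t, c' i = 1 := by
    simp only [hc']
    rw [← Finset.sum_div, Finset.sum_sub_distrib, hc1, hsumite]
    field_simp
  have hy : (∑ i ∈ t, c' i • i) ∈ convexHull ℝ (t : Set (EuclideanSpace ℝ (Fin n))) := by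
    refine Finset.mem_convexHull'.2 ⟨c', fun i hi => ?_, hsum', rfl⟩
    simp only [hc']
    apply div_nonneg _ (le_of_lt h1l)
    by_cases hij : i = j
    · subst hij; simp [hcj]
    · simp [hij, hc0 i hi]
  have hyP : (∑ i ∈ t, c' i • i) ∈ P := by
    rw [hPV]; exact convexHull_mono hts hy
  have hkey : x = (1 - l) • (∑ i ∈ t, c' i • i) + l • j := by
    rw [Finset.smul_sum]
    have : ∀ i ∈ t, (1 - l) • (c' i • i) = c i • i - (if i = j then l else 0) • i := by
      intro i hi
      rw [hc', smul_smul, mul_div_cancel₀ _ (ne_of_gt h1l), sub_smul]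
    rw [Finset.sum_congr rfl this, Finset.sum_sub_distrib, hx]
    have h2 : ∑ i ∈ t, (if i = j then l else 0) • i = l • j := by
      have : ∀ i ∈ t, (if i = j then l else 0) • i = if i = j then l • i else 0 := by
        intro i _; split_ifs <;> simp
      rw [Finset.sum_congr rfl this, Finset.sum_ite_eq' t j (fun i => l • i), if_pos hj]
    rw [h2]; abel
  rw [hkey]
  exact Set.add_mem_add (Set.smul_mem_smul_set hyP) (Set.smul_mem_smul_set (hts hj))

set_option maxHeartbeats 2000000 in
theorem stmt_19 {n : ℕ} (P : Set (EuclideanSpace ℝ (Fin n))) (hP : IsPolytope P)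
    (hint : (interior P).Nonempty) (h : lambdaParam P = 1 / ((n : ℝ) + 1)) :
    ∃ s : Finset (EuclideanSpace ℝ (Fin n)), s.card = n + 1 ∧
      AffineIndependent ℝ (Subtype.val : {x // x ∈ s} → EuclideanSpace ℝ (Fin n)) ∧
      P = convexHull ℝ (s : Set (EuclideanSpace ℝ (Fin n))) := by
  classical
  obtain ⟨S, hS⟩ := hP
  have hPconv : Convex ℝ P := hS ▸ convex_convexHull ℝ _
  have hPcomp : IsCompact P := hS ▸ S.finite_toSet.isCompact_convexHull ℝ
  set V := P.extremePoints ℝ with hV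
  have hVS : V ⊆ ↑S := by rw [hV, hS]; exact extremePoints_convexHull_subset
  have hVfin : V.Finite := S.finite_toSet.subset hVS
  have hPV : P = convexHull ℝ V := by
    have h1 := closure_convexHull_extremePoints hPcomp hPconv
    rw [← hV, IsClosed.closure_eq (hVfin.isClosed_convexHull ℝ)] at h1
    exact h1.symm
  have hrank : Module.finrank ℝ (EuclideanSpace ℝ (Fin n)) = n := finrank_euclideanSpace_fin
  have hspan : affineSpan ℝ V = ⊤ := by
    have h1 : affineSpan ℝ P = ⊤ := by
      rw [← hPconv.interior_nonempty_iff_affineSpan_eq_top]; exact hint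
    calc affineSpan ℝ V = affineSpan ℝ (convexHull ℝ V) := (affineSpan_convexHull V).symm
      _ = affineSpan ℝ P := by rw [← hPV]
      _ = ⊤ := h1
  set Vs : Finset (EuclideanSpace ℝ (Fin n)) := hVfin.toFinset with hVs
  have hVsV : (Vs : Set (EuclideanSpace ℝ (Fin n))) = V := hVfin.coe_toFinset
  -- a full-dimensional affinely independent subset t0 of V
  obtain ⟨t0, ht0V, ht0span, ht0ind⟩ := exists_affineIndependent ℝ (EuclideanSpace ℝ (Fin n)) V
  have ht0fin : t0.Finite := hVfin.subset ht0V
  haveI := ht0fin.fintype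
  have ht0card : Fintype.card ↥t0 = n + 1 := by
    have := ht0ind.affineSpan_eq_top_iff_card_eq_finrank_add_one.mp
      (by rw [Subtype.range_coe]; rw [ht0span]; exact hspan)
    rwa [hrank] at this
  have hVcard : n + 1 ≤ Vs.card := by
    have h1 : ht0fin.toFinset ⊆ Vs := by
      intro x hx
      rw [Set.Finite.mem_toFinset] at hx ⊢
      exact ht0V hx
    calc n + 1 = ht0fin.toFinset.card := by rw [Set.Finite.card_toFinset]; exact ht0card.symm
      _ ≤ Vs.card := Finset.card_le_card h1
  rcases eq_or_lt_of_le hVcard with hcardeq | hcardlt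
  · -- Case A : exactly n+1 vertices
    refine ⟨Vs, hcardeq.symm, ?_, by rw [hPV, hVsV]⟩
    have hcard' : Fintype.card {x // x ∈ Vs} = n + 1 := by
      rw [Fintype.card_coe]; exact hcardeq.symm
    rw [affineIndependent_iff_finrank_vectorSpan_eq ℝ _ hcard']
    have : vectorSpan ℝ (Set.range (Subtype.val : {x // x ∈ Vs} → EuclideanSpace ℝ (Fin n))) = ⊤ := by
      rw [Subtype.range_coe]
      have : affineSpan ℝ (Vs : Set (EuclideanSpace ℝ (Fin n))) = ⊤ := by rw [hVsV]; exact hspan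
      exact AffineSubspace.vectorSpan_eq_top_of_affineSpan_eq_top ℝ _ _ this
    rw [this, finrank_top, hrank]
  · -- Case B : at least n+2 vertices; derive a contradiction
    exfalso
    -- n ≥ 1
    have hn1 : 1 ≤ n := by
      obtain ⟨a, ha, b, hb, hab⟩ := Finset.one_lt_card.mp
        (show 1 < Vs.card by omega)
      haveI : Nontrivial (EuclideanSpace ℝ (Fin n)) := ⟨⟨a, b, hab⟩⟩
      have := Module.finrank_pos (R := ℝ) (M := EuclideanSpace ℝ (Fin n))
      omega
    have hn1R : (2:ℝ) ≤ (n:ℝ) + 1 := by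
      have : (1:ℝ) ≤ (n:ℝ) := by exact_mod_cast hn1
      linarith
    have hnpos : (0:ℝ) < (n:ℝ) + 1 := by positivity
    -- the finite set of configurations
    set T : Finset (Finset (EuclideanSpace ℝ (Fin n)) × EuclideanSpace ℝ (Fin n)) :=
      ((Vs.powersetCard (n+1)) ×ˢ Vs).filter
        (fun p => AffineIndependent ℝ ((↑) : ↥p.1 → EuclideanSpace ℝ (Fin n)) ∧ p.2 ∉ p.1)
      with hTdef
    have hmemT : ∀ p, p ∈ T ↔ ((p.1 ⊆ Vs ∧ p.1.card = n+1) ∧ p.2 ∈ Vs ∧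
        AffineIndependent ℝ ((↑) : ↥p.1 → EuclideanSpace ℝ (Fin n)) ∧ p.2 ∉ p.1) := by
      intro p
      rw [hTdef, Finset.mem_filter, Finset.mem_product, Finset.mem_powersetCard]
      tauto
    -- T is nonempty
    have hTne : T.Nonempty := by
      have h1 : ht0fin.toFinset ⊆ Vs := by
        intro x hx
        rw [Set.Finite.mem_toFinset] at hx ⊢
        exact ht0V hx
      have h2 : ht0fin.toFinset.card = n + 1 := by
        rw [Set.Finite.card_toFinset]; exact ht0card
      have h3 : AffineIndependent ℝ ((↑) : ↥ht0fin.toFinset → EuclideanSpace ℝ (Fin n)) := by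
        have hcoe : (↑ht0fin.toFinset : Set (EuclideanSpace ℝ (Fin n))) = t0 :=
          ht0fin.coe_toFinset
        rw [← hcoe] at ht0ind
        exact ht0ind
      obtain ⟨w, hw⟩ : (Vs \ ht0fin.toFinset).Nonempty := by
        rw [Finset.sdiff_nonempty]
        intro hcon
        have := Finset.card_le_card hcon
        omega
      rw [Finset.mem_sdiff] at hw
      exact ⟨(ht0fin.toFinset, w), (hmemT _).2 ⟨⟨h1, h2⟩, hw.1, h3, hw.2⟩⟩
    -- main choice statement
    have exM : ∀ p ∈ T, ∃ m : ℝ, 0 < m ∧ ∃ (a : EuclideanSpace ℝ (Fin n) → ℝ)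
        (j : EuclideanSpace ℝ (Fin n)) (s0 : ℝ),
        j ∈ p.1 ∧ 0 < s0 ∧ s0 * (-(a j)) = m ∧ (∑ i ∈ p.1, a i) = 1 ∧
        (∑ i ∈ p.1, a i • i) = p.2 ∧ ∀ i ∈ p.1, s0 * a i ≤ 1/(2*((n:ℝ)+1)) := by
      rintro ⟨t, w⟩ hp
      rw [hmemT] at hp
      obtain ⟨⟨htVs, htcard⟩, hwVs, htind, hwt⟩ := hp
      have htop : affineSpan ℝ (↑t : Set (EuclideanSpace ℝ (Fin n))) = ⊤ := by
        have := htind.affineSpan_eq_top_iff_card_eq_finrank_add_one.mpr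
          (by rw [Fintype.card_coe, htcard, hrank])
        rwa [Subtype.range_coe] at this
      have hw_span : w ∈ affineSpan ℝ
          (Set.range ((↑) : ↥t → EuclideanSpace ℝ (Fin n))) := by
        rw [show (Set.range ((↑) : ↥t → EuclideanSpace ℝ (Fin n)))
            = (↑t : Set (EuclideanSpace ℝ (Fin n))) from Subtype.range_coe, htop]
        exact AffineSubspace.mem_top ℝ _ w
      obtain ⟨a', ha'sum, ha'comb⟩ := eq_affineCombination_of_mem_affineSpan_of_fintype hw_span
      have hcomb : w = ∑ i : ↥t, a' i • (i : EuclideanSpace ℝ (Fin n)) := by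
        rw [ha'comb, Finset.affineCombination_eq_linear_combination _ _ _ ha'sum]
      set a : EuclideanSpace ℝ (Fin n) → ℝ :=
        fun x => if hx : x ∈ t then a' ⟨x, hx⟩ else 0 with ha
      have hkey : ∀ i : ↥t, a ↑i = a' i := by
        intro i
        rw [ha]
        exact dif_pos i.2
      have hasum : ∑ i ∈ t, a i = 1 := by
        rw [← Finset.sum_attach t a, ← ha'sum, Finset.univ_eq_attach]
        exact Finset.sum_congr rfl (fun i _ => hkey i)
      have haw : ∑ i ∈ t, a i • i = w := by
        rw [← Finset.sum_attach t (fun i => a i • i), hcomb, Finset.univ_eq_attach]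
        exact Finset.sum_congr rfl (fun i _ => by rw [hkey i])
      have hneg : ∃ j ∈ t, a j < 0 := by
        by_contra hpos
        push_neg at hpos
        have hwhull : w ∈ convexHull ℝ (↑t : Set (EuclideanSpace ℝ (Fin n))) :=
          Finset.mem_convexHull'.2 ⟨a, hpos, hasum, haw⟩
        have htP : convexHull ℝ (↑t : Set (EuclideanSpace ℝ (Fin n))) ⊆ P := by
          rw [hPV]
          exact convexHull_mono (by rw [← hVsV]; exact_mod_cast htVs)
        have hwV : w ∈ V := by rw [← hVsV]; exact hwVs
        have h5 : w ∈ (convexHull ℝ (↑t : Set (EuclideanSpace ℝ (Fin n)))).extremePoints ℝ :=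
          inter_extremePoints_subset_extremePoints_of_subset htP ⟨hwhull, hwV⟩
        have := extremePoints_convexHull_subset h5
        exact hwt (by exact_mod_cast this)
      obtain ⟨j, hjt, hja⟩ := hneg
      set A : ℝ := 1 + ∑ i ∈ t, |a i| with hA
      have hApos : 0 < A := by
        have : (0:ℝ) ≤ ∑ i ∈ t, |a i| := Finset.sum_nonneg (fun i _ => abs_nonneg _)
        rw [hA]; linarith
      have haA : ∀ i ∈ t, a i ≤ A := by
        intro i hi
        have h6 : |a i| ≤ ∑ i ∈ t, |a i| :=
          Finset.single_le_sum (fun i _ => abs_nonneg (a i)) hi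
        have := le_abs_self (a i)
        rw [hA]; linarith
      refine ⟨((1/(2*((n:ℝ)+1)))/A) * (-(a j)), ?_, a, j, (1/(2*((n:ℝ)+1)))/A,
        hjt, by positivity, rfl, hasum, haw, ?_⟩
      · have h7 : 0 < (1/(2*((n:ℝ)+1)))/A := by positivity
        have h8 : 0 < -(a j) := by linarith
        positivity
      · intro i hi
        have h7 : 0 < (1/(2*((n:ℝ)+1)))/A := by positivity
        calc (1/(2*((n:ℝ)+1)))/A * a i ≤ (1/(2*((n:ℝ)+1)))/A * A :=
              mul_le_mul_of_nonneg_left (haA i hi) h7.le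
          _ = 1/(2*((n:ℝ)+1)) := by field_simp
    -- the uniform margin
    set μ : Finset (EuclideanSpace ℝ (Fin n)) × EuclideanSpace ℝ (Fin n) → ℝ :=
      fun p => if hp : p ∈ T then (exM p hp).choose else 1 with hμdef
    have hμpos : ∀ p ∈ T, 0 < μ p := by
      intro p hp
      rw [hμdef]
      simp only [dif_pos hp]
      exact (exM p hp).choose_spec.1
    set δ : ℝ := T.inf' hTne μ with hδdef
    have hδpos : 0 < δ := by
      rw [hδdef, Finset.lt_inf'_iff]
      exact hμpos
    set ε : ℝ := min (δ/((n:ℝ)+1)) (1/(2*((n:ℝ)+1)^2)) with hεdef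
    have hεpos : 0 < ε := lt_min (by positivity) (by positivity)
    have hεle : ε ≤ 1/(2*((n:ℝ)+1)^2) := min_le_right _ _
    have hεδ : ((n:ℝ)+1) * ε ≤ δ := by
      have h1 : ε ≤ δ/((n:ℝ)+1) := min_le_left _ _
      have h2 := mul_le_mul_of_nonneg_left h1 hnpos.le
      calc ((n:ℝ)+1) * ε ≤ ((n:ℝ)+1) * (δ/((n:ℝ)+1)) := h2
        _ = δ := by field_simp
    have hnε : (n:ℝ) * ε ≤ 1/(2*((n:ℝ)+1)) := by
      have h1 : (n:ℝ) * ε ≤ (n:ℝ) * (1/(2*((n:ℝ)+1)^2)) :=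
        mul_le_mul_of_nonneg_left hεle (Nat.cast_nonneg n)
      have h2 : (n:ℝ)/(2*((n:ℝ)+1)^2) ≤ 1/(2*((n:ℝ)+1)) := by
        rw [div_le_div_iff₀ (by positivity) (by positivity)]
        nlinarith [Nat.cast_nonneg (α := ℝ) n]
      rw [mul_one_div] at h1
      linarith
    set l : ℝ := 1/((n:ℝ)+1) + ε with hldef
    have hl0 : 0 ≤ l := by positivity
    have hl1 : l < 1 := by
      have e1 : 1/((n:ℝ)+1) ≤ 1/2 := by
        rw [div_le_div_iff₀ hnpos (by norm_num)]; linarith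
      have e2 : 1/(2*((n:ℝ)+1)^2) ≤ 1/8 := by
        rw [div_le_div_iff₀ (by positivity) (by norm_num)]; nlinarith
      rw [hldef]; linarith
    clear_value μ δ ε l
    -- forward inclusion
    have hsub : P ⊆ (1-l) • P + l • V := by
      intro x hx
      have hx' : x ∈ convexHull ℝ V := by rw [← hPV]; exact hx
      rw [convexHull_eq_union] at hx'
      simp only [Set.mem_iUnion] at hx'
      obtain ⟨t, htV, htind, hxt⟩ := hx'
      have htcard_le : t.card ≤ n + 1 := by
        have h2 := htind.card_le_finrank_succ
        rw [Fintype.card_coe] at h2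
        have h3 : Module.finrank ℝ (vectorSpan ℝ
            (Set.range ((↑) : ↥t → EuclideanSpace ℝ (Fin n)))) ≤ n :=
          le_trans (Submodule.finrank_le _) (le_of_eq hrank)
        omega
      obtain ⟨c, hc0, hc1, hcx⟩ := Finset.mem_convexHull'.1 hxt
      by_cases hbig : ∃ j ∈ t, l ≤ c j
      · obtain ⟨j, hjt, hcj⟩ := hbig
        exact rep_mem hPV htV hc0 hc1 hcx hjt hl0 hl1 hcj
      · push_neg at hbig
        have hcardlow : n + 1 ≤ t.card := by
          by_contra hlt
          push_neg at hlt
          have hsum_le : (1:ℝ) ≤ (t.card : ℝ) * l := by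
            rw [← hc1]
            calc ∑ i ∈ t, c i ≤ ∑ _i ∈ t, l :=
                  Finset.sum_le_sum (fun i hi => (hbig i hi).le)
              _ = (t.card : ℝ) * l := by rw [Finset.sum_const, nsmul_eq_mul]
          have h4 : (t.card : ℝ) ≤ (n:ℝ) := by exact_mod_cast Nat.lt_succ_iff.mp hlt
          have h5 : (n:ℝ) * l < 1 := by
            have hf : (n:ℝ)*(1/((n:ℝ)+1)) = 1 - 1/((n:ℝ)+1) := by field_simp; ring
            have hfe : 1/(2*((n:ℝ)+1)) < 1/((n:ℝ)+1) := by
              rw [div_lt_div_iff₀ (by positivity) hnpos]; nlinarith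
            rw [hldef]; rw [mul_add, hf]; linarith
          nlinarith
        have htcard : t.card = n+1 := le_antisymm htcard_le hcardlow
        have hclow : ∀ i ∈ t, 1/((n:ℝ)+1) - (n:ℝ)*ε ≤ c i := by
          intro i hi
          have hsplit : c i + ∑ k ∈ t.erase i, c k = 1 := by
            rw [Finset.add_sum_erase t c hi]; exact hc1
          have herase : ∑ k ∈ t.erase i, c k ≤ (n:ℝ) * l := by
            calc ∑ k ∈ t.erase i, c k ≤ ∑ _k ∈ t.erase i, l :=
                  Finset.sum_le_sum (fun k hk => (hbig k (Finset.mem_of_mem_erase hk)).le)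
              _ = ((t.erase i).card : ℝ) * l := by rw [Finset.sum_const, nsmul_eq_mul]
              _ = (n:ℝ) * l := by rw [Finset.card_erase_of_mem hi, htcard]; norm_num
          have hnl : (n:ℝ) * l = (n:ℝ)/((n:ℝ)+1) + (n:ℝ)*ε := by rw [hldef]; ring
          have hfield : 1 - (n:ℝ)/((n:ℝ)+1) = 1/((n:ℝ)+1) := by field_simp; ring
          linarith
        have hc2 : ∀ i ∈ t, 1/(2*((n:ℝ)+1)) ≤ c i := by
          intro i hi
          have h1 := hclow i hi
          have hfe : 1/((n:ℝ)+1) - 1/(2*((n:ℝ)+1)) = 1/(2*((n:ℝ)+1)) := by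
            field_simp; ring
          linarith [hnε]
        have htVs : t ⊆ Vs := by
          have h1 : (↑t : Set (EuclideanSpace ℝ (Fin n))) ⊆ ↑Vs := by
            rw [hVsV]; exact htV
          exact_mod_cast h1
        obtain ⟨w, hwVs, hwt⟩ : ∃ w ∈ Vs, w ∉ t := by
          by_contra hcon
          push_neg at hcon
          have h1 : Vs ⊆ t := fun y hy => hcon y hy
          have := Finset.card_le_card h1
          omega
        have hpT : (t, w) ∈ T := (hmemT _).2 ⟨⟨htVs, htcard⟩, hwVs, htind, hwt⟩
        obtain ⟨hm0, a, j, s0, hjt, hs0, hms, hasum, haw, hbound⟩ := (exM (t,w) hpT).choose_spec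
        have hmδ : δ ≤ (exM (t,w) hpT).choose := by
          have h1 : μ (t,w) = (exM (t,w) hpT).choose := by
            rw [hμdef]; simp only [dif_pos hpT]
          rw [← h1, hδdef]
          exact Finset.inf'_le μ hpT
        have hgain : ((n:ℝ)+1)*ε ≤ s0 * (-(a j)) := by
          rw [hms]; exact le_trans hεδ hmδ
        set t' := insert w t with ht'
        set c' : EuclideanSpace ℝ (Fin n) → ℝ :=
          fun i => (if i ∈ t then c i - s0 * a i else 0) + (if i = w then s0 else 0) with hc'
        have hc'w : c' w = s0 := by simp [hc', hwt]
        have hc't : ∀ i ∈ t, c' i = c i - s0 * a i := by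
          intro i hi
          have hne : i ≠ w := fun hh => hwt (hh ▸ hi)
          simp [hc', hi, hne]
        have ht'V : ↑t' ⊆ V := by
          rw [ht', Finset.coe_insert]
          exact Set.insert_subset (by rw [← hVsV]; exact hwVs) htV
        have hsum' : ∑ i ∈ t', c' i = 1 := by
          rw [ht', Finset.sum_insert hwt, hc'w, Finset.sum_congr rfl hc't,
            Finset.sum_sub_distrib, hc1, ← Finset.mul_sum, hasum]
          ring
        have hnn' : ∀ i ∈ t', 0 ≤ c' i := by
          intro i hi
          rw [ht', Finset.mem_insert] at hi
          rcases hi with rfl | hi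
          · rw [hc'w]; exact hs0.le
          · rw [hc't i hi]
            have h1 := hc2 i hi
            have h2 := hbound i hi
            linarith
        have hvec : ∑ i ∈ t', c' i • i = x := by
          rw [ht', Finset.sum_insert hwt, hc'w]
          have h1 : ∀ i ∈ t, c' i • i = c i • i - (s0 * a i) • i := by
            intro i hi; rw [hc't i hi, sub_smul]
          rw [Finset.sum_congr rfl h1, Finset.sum_sub_distrib, hcx]
          have h2 : ∑ i ∈ t, (s0 * a i) • i = s0 • (∑ i ∈ t, a i • i) := by
            rw [Finset.smul_sum]
            exact Finset.sum_congr rfl (fun i _ => mul_smul _ _ _)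
          rw [h2, haw]
          abel
        have hj' : j ∈ t' := Finset.mem_insert_of_mem hjt
        have hcj' : l ≤ c' j := by
          rw [hc't j hjt]
          have h1 := hclow j hjt
          have h2 : s0 * (-(a j)) = -(s0 * a j) := by ring
          rw [hldef]
          rw [h2] at hgain
          linarith
        exact rep_mem hPV ht'V hnn' hsum' hvec hj' hl0 hl1 hcj'
    -- reverse inclusion
    have hsup : (1-l) • P + l • V ⊆ P := by
      rintro z hz
      rw [Set.mem_add] at hz
      obtain ⟨u, hu, v, hv, rfl⟩ := hz
      obtain ⟨p0, hp0, rfl⟩ := hu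
      obtain ⟨v0, hv0, rfl⟩ := hv
      exact hPconv hp0 (extremePoints_subset hv0) (by linarith) hl0 (by ring)
    -- l belongs to the defining set of lambdaParam
    have hlmem : l ∈ {l : ℝ | l ∈ Set.Icc (0:ℝ) 1 ∧
        P = (1 - l) • P + l • (P.extremePoints ℝ)} :=
      ⟨⟨hl0, hl1.le⟩, Set.Subset.antisymm hsub hsup⟩
    have hbdd : BddAbove {l : ℝ | l ∈ Set.Icc (0:ℝ) 1 ∧
        P = (1 - l) • P + l • (P.extremePoints ℝ)} :=
      ⟨1, fun y hy => hy.1.2⟩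
    have hle : l ≤ lambdaParam P := le_csSup hbdd hlmem
    rw [h] at hle
    rw [hldef] at hle
    linarith
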